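/- Let m, r : [0,∞) → [0,∞) be continuous functions with ∫₀^∞ r(s) ds < ∞ and with the product m·r integrable on [0,∞). Let A ≥ 0 and M > 0, and suppose that for every t ∈ [0,∞), m(t) ≤ A + M ∫_t^∞ m(s) r(s) ds. Then for every t ∈ [0,∞), m(t) ≤ A · exp( M ∫_t^∞ r(s) ds ). -/

import Mathlib

open MeasureTheory Set Filter

/-- Backward Gronwall-type lemma on the infinite horizon `[0, ∞)`:
if `m`, `r` are continuous nonnegative functions on `[0, ∞)`, `r` is integrable on `(0, ∞)`,
the product `m * r` is integrable on `(0, ∞)`, `A ≥ 0`, `M > 0`, and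
`m t ≤ A + M ∫_t^∞ m s * r s ds` for all `t ≥ 0`, then
`m t ≤ A * exp (M ∫_t^∞ r s ds)` for all `t ≥ 0`. -/
theorem infinite_horizon_backward_gronwall
    (m r : ℝ → ℝ)
    (hm_cont : ContinuousOn m (Ici (0 : ℝ)))
    (hr_cont : ContinuousOn r (Ici (0 : ℝ)))
    (hm_nonneg : ∀ t ∈ Ici (0 : ℝ), 0 ≤ m t)
    (hr_nonneg : ∀ t ∈ Ici (0 : ℝ), 0 ≤ r t)
    (hr_int : IntegrableOn r (Ioi (0 : ℝ)))
    (hmr_int : IntegrableOn (fun s => m s * r s) (Ioi (0 : ℝ)))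
    (A M : ℝ) (hA : 0 ≤ A) (hM : 0 < M)
    (hineq : ∀ t ∈ Ici (0 : ℝ), m t ≤ A + M * ∫ s in Ioi t, m s * r s) :
    ∀ t ∈ Ici (0 : ℝ), m t ≤ A * Real.exp (M * ∫ s in Ioi t, r s) := by
  have hsplit : ∀ (f : ℝ → ℝ), IntegrableOn f (Ioi (0:ℝ)) → ∀ t, 0 ≤ t →
      (∫ s in Ioi (0:ℝ), f s) = (∫ s in (0:ℝ)..t, f s) + ∫ s in Ioi t, f s := by
    intro f hf t ht
    rw [intervalIntegral.integral_of_le ht, ← MeasureTheory.setIntegral_union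
      (Ioc_disjoint_Ioi le_rfl) measurableSet_Ioi
      (hf.mono_set Ioc_subset_Ioi_self) (hf.mono_set (Ioi_subset_Ioi ht)),
      Ioc_union_Ioi_eq_Ioi ht]
  set f : ℝ → ℝ := fun s => m s * r s with hf_def
  set C : ℝ := ∫ s in Ioi (0:ℝ), f s with hC
  set I : ℝ := ∫ s in Ioi (0:ℝ), r s with hI
  set G : ℝ → ℝ := fun t => ∫ s in (0:ℝ)..t, f s with hG_def
  set B : ℝ → ℝ := fun t => ∫ s in (0:ℝ)..t, r s with hB_def
  have hf_cont : ContinuousOn f (Ici (0:ℝ)) := hm_cont.mul hr_cont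
  -- tail integrals
  have htailf : ∀ t, 0 ≤ t → (∫ s in Ioi t, f s) = C - G t := by
    intro t ht; rw [hC, hsplit f hmr_int t ht]; ring
  have htailr : ∀ t, 0 ≤ t → (∫ s in Ioi t, r s) = I - B t := by
    intro t ht; rw [hI, hsplit r hr_int t ht]; ring
  -- the auxiliary function
  set h : ℝ → ℝ := fun t => (A + M * (C - G t)) * Real.exp (M * B t) with hh_def
  -- derivatives for t > 0
  have hderiv : ∀ t : ℝ, 0 < t → HasDerivAt h
      (M * r t * Real.exp (M * B t) * ((A + M * (C - G t)) - m t)) t := by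
    intro t ht
    have htmem : Ici (0:ℝ) ∈ nhds t := Ici_mem_nhds ht
    have hfca : ContinuousAt f t := hf_cont.continuousAt htmem
    have hrca : ContinuousAt r t := hr_cont.continuousAt htmem
    have hfint : IntervalIntegrable f volume 0 t := by
      rw [intervalIntegrable_iff_integrableOn_Ioc_of_le ht.le]
      exact hmr_int.mono_set Ioc_subset_Ioi_self
    have hrint : IntervalIntegrable r volume 0 t := by
      rw [intervalIntegrable_iff_integrableOn_Ioc_of_le ht.le]
      exact hr_int.mono_set Ioc_subset_Ioi_self
    have hfm : StronglyMeasurableAtFilter f (nhds t) volume :=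
      ContinuousOn.stronglyMeasurableAtFilter isOpen_Ioi
        (hf_cont.mono Ioi_subset_Ici_self) t ht
    have hrm : StronglyMeasurableAtFilter r (nhds t) volume :=
      ContinuousOn.stronglyMeasurableAtFilter isOpen_Ioi
        (hr_cont.mono Ioi_subset_Ici_self) t ht
    have hG' : HasDerivAt G (f t) t :=
      intervalIntegral.integral_hasDerivAt_right hfint hfm hfca
    have hB' : HasDerivAt B (r t) t :=
      intervalIntegral.integral_hasDerivAt_right hrint hrm hrca
    have hφ : HasDerivAt (fun u => A + M * (C - G u)) (M * (0 - f t)) t :=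
      (((hasDerivAt_const t C).sub hG').const_mul M).const_add A
    have hE : HasDerivAt (fun u => Real.exp (M * B u))
        (Real.exp (M * B t) * (M * r t)) t := (hB'.const_mul M).exp
    have := hφ.mul hE
    refine this.congr_deriv ?_
    simp only [hf_def]
    ring
  -- continuity of h on [0, ∞)
  have hGB_cont : ∀ T : ℝ, 0 ≤ T → ContinuousOn h (Icc 0 T) := by
    intro T hT
    have hGc : ContinuousOn G (Icc (0:ℝ) T) := by
      have : IntegrableOn f (uIcc (0:ℝ) T) := by
        rw [uIcc_of_le hT, integrableOn_Icc_iff_integrableOn_Ioc]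
        exact hmr_int.mono_set Ioc_subset_Ioi_self
      simpa [uIcc_of_le hT] using intervalIntegral.continuousOn_primitive_interval this
    have hBc : ContinuousOn B (Icc (0:ℝ) T) := by
      have : IntegrableOn r (uIcc (0:ℝ) T) := by
        rw [uIcc_of_le hT, integrableOn_Icc_iff_integrableOn_Ioc]
        exact hr_int.mono_set Ioc_subset_Ioi_self
      simpa [uIcc_of_le hT] using intervalIntegral.continuousOn_primitive_interval this
    exact (continuousOn_const.add (continuousOn_const.mul
      (continuousOn_const.sub hGc))).mul
      ((continuousOn_const.mul hBc).rexp)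
  -- m t ≤ φ t for t ≥ 0
  have hmφ : ∀ t, 0 ≤ t → m t ≤ A + M * (C - G t) := by
    intro t ht
    have := hineq t ht
    rwa [htailf t ht] at this
  -- monotonicity: h t0 ≤ h T for 0 ≤ t0 ≤ T
  have hmono : ∀ t0 T : ℝ, 0 ≤ t0 → t0 ≤ T → h t0 ≤ h T := by
    intro t0 T ht0 htT
    have hmon : MonotoneOn h (Icc t0 T) := by
      apply monotoneOn_of_deriv_nonneg (convex_Icc t0 T)
      · exact (hGB_cont T (ht0.trans htT)).mono (Icc_subset_Icc ht0 le_rfl)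
      · intro x hx
        rw [interior_Icc] at hx
        exact (hderiv x (ht0.trans_lt hx.1)).differentiableAt.differentiableWithinAt
      · intro x hx
        rw [interior_Icc] at hx
        have hx0 : 0 < x := ht0.trans_lt hx.1
        rw [(hderiv x hx0).deriv]
        have h1 : 0 ≤ M * r x := mul_nonneg hM.le (hr_nonneg x hx0.le)
        have h2 : 0 ≤ (A + M * (C - G x)) - m x := sub_nonneg.2 (hmφ x hx0.le)
        positivity
    exact hmon ⟨le_rfl, htT⟩ ⟨htT, le_rfl⟩ htT
  -- limit of h at infinity
  have hGlim : Tendsto G atTop (nhds C) :=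
    MeasureTheory.intervalIntegral_tendsto_integral_Ioi 0 hmr_int tendsto_id
  have hBlim : Tendsto B atTop (nhds I) :=
    MeasureTheory.intervalIntegral_tendsto_integral_Ioi 0 hr_int tendsto_id
  have hhlim : Tendsto h atTop (nhds (A * Real.exp (M * I))) := by
    have : Tendsto h atTop
        (nhds ((A + M * (C - C)) * Real.exp (M * I))) :=
      ((tendsto_const_nhds.add (tendsto_const_nhds.mul
        (tendsto_const_nhds.sub hGlim))).mul
        ((tendsto_const_nhds.mul hBlim).rexp))
    simpa using this
  -- conclude
  intro t ht
  have hht : h t ≤ A * Real.exp (M * I) := by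
    apply ge_of_tendsto hhlim
    filter_upwards [eventually_ge_atTop t] with T hT
    exact hmono t T ht hT
  have hexp_pos : 0 < Real.exp (M * B t) := Real.exp_pos _
  have hφle : A + M * (C - G t) ≤ A * Real.exp (M * I) / Real.exp (M * B t) := by
    rw [le_div_iff₀ hexp_pos]
    exact hht
  calc m t ≤ A + M * (C - G t) := hmφ t ht
    _ ≤ A * Real.exp (M * I) / Real.exp (M * B t) := hφle
    _ = A * Real.exp (M * (I - B t)) := by
        rw [mul_sub, Real.exp_sub]; ring
    _ = A * Real.exp (M * ∫ s in Ioi t, r s) := by rw [htailr t ht]
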